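/- Let K be a field of prime characteristic p, for k ≥ 0 set τ_k = Σ_{r=0}^{k} X^{p^r + p^{2r}} ∈ K[X], and let i ≥ 1 be an integer. Let E_i ⊆ K[X] be the set of all polynomials X^j · ∂_{p^k}(τ_k) with 0 ≤ k ≤ i, j ≥ 0 and j + p^k ≤ p^i. Then the K-vector space spanned by E_i has dimension at least Σ_{k=⌈i/2⌉}^{i} (p^i − p^k). -/

import Mathlib

open Polynomial

/-- Polynomials with pairwise distinct `natDegree`s, all nonzero, are linearly independent. -/
lemma linearIndependent_of_natDegree_injective {K : Type*} [Field K] {ι : Type*} (f : ι → K[X])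
    (h0 : ∀ x, f x ≠ 0) (hd : Function.Injective fun x => (f x).natDegree) :
    LinearIndependent K f := by
  classical
  rw [linearIndependent_iff']
  intro s
  induction s using Finset.strongInduction with
  | _ s ih =>
    intro c hsum j hj
    obtain ⟨i0, hi0, hmax⟩ := Finset.exists_max_image s (fun x => (f x).natDegree) ⟨j, hj⟩
    have hc0 : c i0 = 0 := by
      have h1 := congrArg (fun q : K[X] => q.coeff ((f i0).natDegree)) hsum
      simp only [finset_sum_coeff, coeff_smul, coeff_zero, smul_eq_mul] at h1
      rw [Finset.sum_eq_single i0] at h1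
      · have hl : (f i0).coeff (f i0).natDegree ≠ 0 := by
          rw [← leadingCoeff]; exact leadingCoeff_ne_zero.mpr (h0 i0)
        exact (mul_eq_zero.mp h1).resolve_right hl
      · intro x hx hxne
        have hlt : (f x).natDegree < (f i0).natDegree :=
          lt_of_le_of_ne (hmax x hx) (fun h => hxne (hd h))
        rw [coeff_eq_zero_of_natDegree_lt hlt, mul_zero]
      · intro h; exact absurd hi0 h
    by_cases hji : j = i0
    · rw [hji]; exact hc0
    · have hj' : j ∈ s.erase i0 := Finset.mem_erase.mpr ⟨hji, hj⟩
      refine ih (s.erase i0) (Finset.erase_ssubset hi0) c ?_ j hj'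
      rwa [← Finset.add_sum_erase s _ hi0, hc0, zero_smul, zero_add] at hsum

/-- Lucas-type fact: `(p^a + p^b).choose (p^a) = 1` in a field of characteristic `p`. -/
lemma cast_choose_pow_add_pow {K : Type*} [Field K] {p : ℕ} [Fact p.Prime] [CharP K p]
    (a b : ℕ) (hab : a < b) : (((p ^ a + p ^ b).choose (p ^ a) : K)) = 1 := by
  have hp : p.Prime := Fact.out
  have key : ((X + 1 : K[X])) ^ (p ^ a + p ^ b)
      = X ^ (p ^ a + p ^ b) + X ^ (p ^ a) + X ^ (p ^ b) + 1 := by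
    rw [pow_add, add_pow_char_pow, add_pow_char_pow, one_pow, one_pow, pow_add]
    ring
  have h2 := congrArg (fun q : K[X] => q.coeff (p ^ a)) key
  have hne1 : p ^ a ≠ p ^ a + p ^ b := by
    have : 0 < p ^ b := pow_pos hp.pos b
    omega
  have hne2 : p ^ a ≠ p ^ b :=
    ne_of_lt (Nat.pow_lt_pow_right hp.one_lt hab)
  have hne3 : p ^ a ≠ 0 := (pow_pos hp.pos a).ne'
  simpa [coeff_X_add_one_pow, coeff_X_pow, coeff_one, hne1, hne2, hne3, hp.ne_zero] using h2

lemma coeff_hasseDeriv_tau {K : Type*} [Field K] {p : ℕ} [Fact p.Prime] [CharP K p]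
    (k : ℕ) (hk : 1 ≤ k) :
    (Polynomial.hasseDeriv (p ^ k)
        (∑ r ∈ Finset.range (k + 1), (X : K[X]) ^ (p ^ r + p ^ (2 * r)))).coeff (p ^ (2 * k))
      = 1 := by
  have hp : p.Prime := Fact.out
  have hmono : StrictMono fun r : ℕ => p ^ r + p ^ (2 * r) := by
    intro r s hrs
    have h1 := Nat.pow_lt_pow_right hp.one_lt hrs
    have h2 := Nat.pow_lt_pow_right hp.one_lt (show 2 * r < 2 * s by omega)
    simpa using Nat.add_lt_add h1 h2
  rw [hasseDeriv_coeff]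
  have hcoeff : (∑ r ∈ Finset.range (k + 1), (X : K[X]) ^ (p ^ r + p ^ (2 * r))).coeff
      (p ^ (2 * k) + p ^ k) = 1 := by
    rw [finset_sum_coeff, Finset.sum_eq_single k]
    · rw [coeff_X_pow, if_pos (by omega)]
    · intro r _ hrk
      rw [coeff_X_pow, if_neg]
      intro h
      exact hrk (hmono.injective (show p ^ r + p ^ (2 * r) = p ^ k + p ^ (2 * k) by omega))
    · intro h; exact absurd (Finset.self_mem_range_succ k) h
  rw [hcoeff, mul_one, add_comm (p ^ (2 * k)) (p ^ k)]
  exact cast_choose_pow_add_pow k (2 * k) (by omega)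

lemma natDegree_hasseDeriv_tau {K : Type*} [Field K] {p : ℕ} [Fact p.Prime] [CharP K p]
    (k : ℕ) (hk : 1 ≤ k) :
    (Polynomial.hasseDeriv (p ^ k)
        (∑ r ∈ Finset.range (k + 1), (X : K[X]) ^ (p ^ r + p ^ (2 * r))) : K[X]).natDegree
      = p ^ (2 * k) := by
  have hp : p.Prime := Fact.out
  apply le_antisymm
  · refine le_trans (natDegree_hasseDeriv_le _ _) ?_
    have hτ : (∑ r ∈ Finset.range (k + 1), (X : K[X]) ^ (p ^ r + p ^ (2 * r))).natDegree
        ≤ p ^ k + p ^ (2 * k) := by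
      refine natDegree_sum_le_of_forall_le _ _ ?_
      intro r hr
      rw [natDegree_X_pow]
      have hrk : r ≤ k := by simpa [Nat.lt_succ_iff] using hr
      have h1 : p ^ r ≤ p ^ k := Nat.pow_le_pow_right hp.pos hrk
      have h2 : p ^ (2 * r) ≤ p ^ (2 * k) := Nat.pow_le_pow_right hp.pos (by omega)
      omega
    omega
  · apply le_natDegree_of_ne_zero
    rw [coeff_hasseDeriv_tau k hk]
    exact one_ne_zero

theorem dim_span_E_ge (K : Type*) [Field K] (p : ℕ) [Fact p.Prime] [CharP K p]
    (i : ℕ) (hi : 1 ≤ i) :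
    ∑ k ∈ Finset.Icc ((i + 1) / 2) i, (p ^ i - p ^ k) ≤
      Module.finrank K
        (Submodule.span K
          {f : K[X] | ∃ j k : ℕ, k ≤ i ∧ j + p ^ k ≤ p ^ i ∧
            f = X ^ j * Polynomial.hasseDeriv (p ^ k)
              (∑ r ∈ Finset.range (k + 1), (X : K[X]) ^ (p ^ r + p ^ (2 * r)))}) := by
  classical
  have hp : p.Prime := Fact.out
  set m := (i + 1) / 2 with hm
  set τ : ℕ → K[X] :=
    fun k => ∑ r ∈ Finset.range (k + 1), (X : K[X]) ^ (p ^ r + p ^ (2 * r)) with hτ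
  set S : Set K[X] := {f : K[X] | ∃ j k : ℕ, k ≤ i ∧ j + p ^ k ≤ p ^ i ∧
      f = X ^ j * Polynomial.hasseDeriv (p ^ k) (τ k)} with hS
  -- the index type and the family
  let ι := (k : (Finset.Icc m i : Finset ℕ)) × Fin (p ^ i - p ^ (k : ℕ))
  let b : ι → K[X] := fun x => X ^ (x.2 : ℕ) * Polynomial.hasseDeriv (p ^ (x.1 : ℕ)) (τ (x.1 : ℕ))
  have hmem : ∀ x : ι, m ≤ (x.1 : ℕ) ∧ (x.1 : ℕ) ≤ i := by
    intro x
    have := x.1.2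
    rw [Finset.mem_Icc] at this
    exact this
  have hm1 : 1 ≤ m := by omega
  -- nonvanishing and degrees
  have hD0 : ∀ x : ι, Polynomial.hasseDeriv (p ^ (x.1 : ℕ)) (τ (x.1 : ℕ)) ≠ 0 := by
    intro x h
    have := coeff_hasseDeriv_tau (K := K) (p := p) (x.1 : ℕ) (le_trans hm1 (hmem x).1)
    rw [hτ] at h
    rw [h] at this
    simp at this
  have hb0 : ∀ x : ι, b x ≠ 0 := fun x =>
    mul_ne_zero (pow_ne_zero _ X_ne_zero) (hD0 x)
  have hdeg : ∀ x : ι, (b x).natDegree = (x.2 : ℕ) + p ^ (2 * (x.1 : ℕ)) := by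
    intro x
    show (X ^ (x.2 : ℕ) * _).natDegree = _
    rw [natDegree_mul (pow_ne_zero _ X_ne_zero) (hD0 x), natDegree_X_pow, hτ,
      natDegree_hasseDeriv_tau (K := K) (p := p) (x.1 : ℕ) (le_trans hm1 (hmem x).1)]
  -- degrees are pairwise distinct
  have key : ∀ k1 k2 j1 : ℕ, m ≤ k1 → k1 < k2 → j1 < p ^ i - p ^ k1 →
      j1 + p ^ (2 * k1) < p ^ (2 * k2) := by
    intro k1 k2 j1 hk1 hk12 hj1
    have h1 : p ^ i ≤ p ^ (2 * k1) := Nat.pow_le_pow_right hp.pos (by omega)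
    have h2 : p ^ (2 * k1 + 1) ≤ p ^ (2 * k2) := Nat.pow_le_pow_right hp.pos (by omega)
    have h3 : p ^ (2 * k1 + 1) = p * p ^ (2 * k1) := by ring
    have h4 : 2 ≤ p := hp.two_le
    have h5 : 0 < p ^ k1 := pow_pos hp.pos _
    have h6 : 2 * p ^ (2 * k1) ≤ p * p ^ (2 * k1) :=
      Nat.mul_le_mul_right _ h4
    omega
  have hinj : Function.Injective fun x : ι => (b x).natDegree := by
    intro x y hxy
    simp only [hdeg] at hxy
    have hx := hmem x; have hy := hmem y
    have hx2 := x.2.2; have hy2 := y.2.2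
    have hk : (x.1 : ℕ) = (y.1 : ℕ) := by
      rcases lt_trichotomy (x.1 : ℕ) (y.1 : ℕ) with h | h | h
      · have := key (x.1 : ℕ) (y.1 : ℕ) (x.2 : ℕ) hx.1 h hx2
        omega
      · exact h
      · have := key (y.1 : ℕ) (x.1 : ℕ) (y.2 : ℕ) hy.1 h hy2
        omega
    have hk' : x.1 = y.1 := Subtype.ext hk
    have hpp : p ^ (2 * (x.1 : ℕ)) = p ^ (2 * (y.1 : ℕ)) := by rw [hk]
    have hj : (x.2 : ℕ) = (y.2 : ℕ) := by omega
    rcases x with ⟨xk, xj⟩; rcases y with ⟨yk, yj⟩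
    cases hk'
    exact congrArg _ (Fin.ext hj)
  have hli : LinearIndependent K b := linearIndependent_of_natDegree_injective b hb0 hinj
  -- the family lands in S
  have hbS : ∀ x : ι, b x ∈ S := by
    intro x
    refine ⟨(x.2 : ℕ), (x.1 : ℕ), (hmem x).2, ?_, rfl⟩
    have h1 : p ^ (x.1 : ℕ) ≤ p ^ i := Nat.pow_le_pow_right hp.pos (hmem x).2
    have h2 := x.2.2
    omega
  have hrange : Set.range b ⊆ S := Set.range_subset_iff.mpr hbS
  -- S is finite
  have hfin : S.Finite := by
    have hsub : S ⊆ (fun jk : ℕ × ℕ =>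
        X ^ jk.1 * Polynomial.hasseDeriv (p ^ jk.2) (τ jk.2)) '' (Set.Iic (p ^ i) ×ˢ Set.Iic i) := by
      rintro f ⟨j, k, hk, hjk, rfl⟩
      refine ⟨(j, k), ⟨?_, hk⟩, rfl⟩
      have : 0 < p ^ k := pow_pos hp.pos k
      simp only [Set.mem_Iic]
      omega
    exact (((Set.finite_Iic (p ^ i)).prod (Set.finite_Iic i)).image _).subset hsub
  have hfd : FiniteDimensional K (Submodule.span K S) := FiniteDimensional.span_of_finite K hfin
  have hcard : Fintype.card ι = ∑ k ∈ Finset.Icc m i, (p ^ i - p ^ k) := by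
    rw [Fintype.card_sigma]
    simp only [Fintype.card_fin]
    exact Finset.sum_attach (Finset.Icc m i) (fun k => p ^ i - p ^ k)
  calc ∑ k ∈ Finset.Icc m i, (p ^ i - p ^ k) = Fintype.card ι := hcard.symm
    _ = Module.finrank K (Submodule.span K (Set.range b)) := (finrank_span_eq_card hli).symm
    _ ≤ Module.finrank K (Submodule.span K S) :=
        Submodule.finrank_mono (Submodule.span_mono hrange)
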